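/- If U is a nonprincipal ultrafilter on ω, then U regarded as a preorder under containment ⊇ is not cofinally equivalent to any coordinatewise product ∏_{μ∈S} μ where S is a set of infinite regular cardinals (including the empty product, i.e., the one-element order). Equivalently, no nonprincipal neighborhood filter in βω is cofinally scalene. -/

import Mathlib

universe u v w

/-- Two preorders are *cofinally equivalent* if there is a preorder (given here by a
reflexive transitive relation `le` on `R`) such that both are order isomorphic to
cofinal subsets of it. -/
def CofEquiv (P : Type u) (Q : Type v) [Preorder P] [Preorder Q] : Prop :=
  ∃ (R : Type (max u v)) (le : R → R → Prop),
    Reflexive le ∧ Transitive le ∧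
    ∃ (f : P → R) (g : Q → R),
      Function.Injective f ∧ Function.Injective g ∧
      (∀ a b : P, a ≤ b ↔ le (f a) (f b)) ∧
      (∀ a b : Q, a ≤ b ↔ le (g a) (g b)) ∧
      (∀ r : R, ∃ a : P, le r (f a)) ∧
      (∀ r : R, ∃ b : Q, le r (g b))

/-- An ultrafilter on `ω` as a preorder under containment `⊇`. -/
def UOrd (U : Ultrafilter ℕ) := {s : Set ℕ // s ∈ U}

instance (U : Ultrafilter ℕ) : Preorder (UOrd U) where
  le s t := Subtype.val t ⊆ Subtype.val s
  le_refl _ := subset_rfl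
  le_trans _ _ _ h1 h2 := Set.Subset.trans h2 h1

open Cardinal Ordinal in
/-- A countable subset of the order type of a regular uncountable cardinal is bounded. -/
lemma aux_bdd_of_countable {μ : Cardinal.{0}} (hreg : μ.IsRegular) (hμ : ℵ₀ < μ)
    (X : Set μ.ord.ToType) (hX : X.Countable) : ∃ b, ∀ x ∈ X, x ≤ b := by
  have e := Ordinal.ToType.mk (o := μ.ord)
  have hslt : (⨆ x : X, (e.symm x.1).1) < μ.ord := by
    apply Ordinal.iSup_lt_ord
    · have : Countable X := hX.to_subtype
      calc #X ≤ ℵ₀ := Cardinal.mk_le_aleph0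
        _ < μ := hμ
        _ = μ.ord.cof := hreg.cof_eq.symm
    · intro i; exact (e.symm i.1).2
  refine ⟨e ⟨_, hslt⟩, fun x hx => ?_⟩
  have h1 : (e.symm x : Set.Iio μ.ord) ≤ ⟨_, hslt⟩ := by
    refine Subtype.mk_le_mk.2 ?_
    exact Ordinal.le_iSup (fun x : X => (e.symm x.1).1) ⟨x, hx⟩
  have := e.monotone h1
  rwa [OrderIso.apply_symm_apply] at this

/-- A nonprincipal ultrafilter has only infinite members. -/
lemma aux_infinite_of_mem (U : Ultrafilter ℕ) (hU : ∀ s : Set ℕ, sᶜ.Finite → s ∈ U)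
    {s : Set ℕ} (hs : s ∈ U) : s.Infinite := by
  by_contra h
  rw [Set.not_infinite] at h
  have hfin := h
  have hsc : sᶜ ∈ U := hU sᶜ (by rwa [compl_compl])
  have : s ∩ sᶜ ∈ U := Filter.inter_mem hs hsc
  rw [Set.inter_compl_self] at this
  exact U.empty_notMem this

/-- A nonprincipal ultrafilter has no countable base. -/
lemma aux_no_countable_base (U : Ultrafilter ℕ) (hU : ∀ s : Set ℕ, sᶜ.Finite → s ∈ U)
    (m : ℕ → Set ℕ) (hm : ∀ n, m n ∈ U) (hbase : ∀ s ∈ U, ∃ n, m n ⊆ s) : False := by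
  classical
  -- decreasing intersections
  set M : ℕ → Set ℕ := fun n => ⋂ i ∈ Finset.range (n + 1), m i with hM
  have hMU : ∀ n, M n ∈ U := by
    intro n
    exact (Filter.biInter_finset_mem _).2 fun i _ => hm i
  have hManti : ∀ {i j : ℕ}, i ≤ j → M j ⊆ M i := by
    intro i j hij x hx
    simp only [hM, Set.mem_iInter, Finset.mem_range] at hx ⊢
    intro k hk
    exact hx k (by omega)
  have hMm : ∀ n, M n ⊆ m n := by
    intro n x hx
    simp only [hM, Set.mem_iInter] at hx
    exact hx n (Finset.self_mem_range_succ n)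
  -- a strictly increasing selector
  have hinf : ∀ n, (M n).Infinite := fun n => aux_infinite_of_mem U hU (hMU n)
  have hnext : ∀ (n b : ℕ), ∃ k, k ∈ M n ∧ b < k := by
    intro n b
    obtain ⟨k, hk, hbk⟩ := (hinf n).exists_gt b
    exact ⟨k, hk, hbk⟩
  choose nxt hnxt1 hnxt2 using hnext
  let a : ℕ → ℕ := fun n => Nat.rec (nxt 0 0) (fun k ak => nxt (k + 1) ak) n
  have ha : ∀ n, a n ∈ M n := by
    intro n; cases n with
    | zero => exact hnxt1 0 0
    | succ k => exact hnxt1 (k + 1) (a k)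
  have hmono : StrictMono a := by
    apply strictMono_nat_of_lt_succ
    intro n
    exact hnxt2 (n + 1) (a n)
  -- the diagonal set
  set B : Set ℕ := Set.range (fun i => a (2 * i)) with hB
  rcases U.mem_or_compl_mem B with hBm | hBm
  · obtain ⟨n, hn⟩ := hbase B hBm
    have : a (2 * n + 1) ∈ B := hn (hMm n (hManti (by omega) (ha (2 * n + 1))))
    obtain ⟨i, hi⟩ := this
    have hi' : a (2 * i) = a (2 * n + 1) := hi
    have h2 : 2 * i = 2 * n + 1 := hmono.injective hi'
    omega
  · obtain ⟨n, hn⟩ := hbase Bᶜ hBm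
    have : a (2 * n) ∈ Bᶜ := hn (hMm n (hManti (by omega) (ha (2 * n))))
    exact this ⟨n, rfl⟩

/-- A nonprincipal ultrafilter is not a countable union of σ-bounded pieces. -/
lemma aux_no_sigma_cover (U : Ultrafilter ℕ) (hU : ∀ s : Set ℕ, sᶜ.Finite → s ∈ U)
    (V : ℕ → Set (UOrd U)) (hcover : ∀ u, ∃ n, u ∈ V n)
    (hσ : ∀ (n : ℕ) (X : Set (UOrd U)), X.Countable → X ⊆ V n →
      ∃ t, t ∈ U ∧ ∀ x ∈ X, t ⊆ x.val) : False := by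
  classical
  have huniv : (Set.univ : Set ℕ) ∈ U := Filter.univ_mem
  set P : ℕ → ℕ → Prop := fun n k => ∃ v : UOrd U, v ∈ V n ∧ k ∉ v.val with hP
  set w : ℕ → ℕ → UOrd U := fun n k =>
    if h : P n k then h.choose else ⟨Set.univ, huniv⟩ with hw
  have hwspec : ∀ n k, P n k → w n k ∈ V n ∧ k ∉ (w n k).val := by
    intro n k h
    simp only [hw, dif_pos h]
    change w n k ∈ V n ∧ k ∉ (w n k).val
    rw [show w n k = h.choose from dif_pos h]
    exact h.choose_spec
  have hX : ∀ n, ∃ t, t ∈ U ∧ ∀ x ∈ (w n '' {k | P n k}), t ⊆ x.val := by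
    intro n
    apply hσ n _ ((Set.to_countable _).image _)
    rintro x ⟨k, hk, rfl⟩
    exact (hwspec n k hk).1
  choose t ht1 ht2 using hX
  apply aux_no_countable_base U hU t ht1
  intro s hs
  obtain ⟨n, hn⟩ := hcover ⟨s, hs⟩
  refine ⟨n, fun k hk => ?_⟩
  by_contra hks
  have hPnk : P n k := ⟨⟨s, hs⟩, hn, hks⟩
  exact (hwspec n k hPnk).2 (ht2 n _ ⟨k, hPnk, rfl⟩ hk)

/-- No nonprincipal ultrafilter on `ω` (equivalently, no nonprincipal
neighborhood filter in `βω`), ordered by `⊇`, is cofinally equivalent to a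
coordinatewise product `∏_{μ ∈ S} μ` of a set `S` of infinite regular cardinals
(the empty product, a one-element order, included); i.e. none is cofinally scalene. -/
theorem nonprincipal_ultrafilter_not_cofinally_scalene (U : Ultrafilter ℕ)
    (hU : ∀ s : Set ℕ, sᶜ.Finite → s ∈ U)
    (S : Set Cardinal.{0}) (hS : ∀ μ ∈ S, μ.IsRegular) :
    ¬ CofEquiv (UOrd U) (∀ μ : S, (μ : Cardinal).ord.ToType) := by
  classical
  rintro ⟨R, le, hrefl, htrans, f, g, -, -, hf, hg, cf, cg⟩
  have hφ : ∀ u : UOrd U, ∃ d : (∀ μ : S, (μ : Cardinal).ord.ToType), le (f u) (g d) :=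
    fun u => cg (f u)
  choose φ hφs using hφ
  -- pulling back bounds
  have pull : ∀ (X : Set (UOrd U)) (b : ∀ μ : S, (μ : Cardinal).ord.ToType),
      (∀ x ∈ X, φ x ≤ b) → ∃ t, t ∈ U ∧ ∀ x ∈ X, t ⊆ x.val := by
    intro X b hb
    obtain ⟨u₀, hu₀⟩ := cf (g b)
    refine ⟨u₀.val, u₀.2, fun x hx => ?_⟩
    have h1 : le (f x) (g b) := htrans (hφs x) ((hg _ _).1 (hb x hx))
    exact (hf x u₀).2 (htrans h1 hu₀)
  by_cases hmem : Cardinal.aleph0 ∈ S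
  · -- the ℵ₀ coordinate gives the countable decomposition
    set c0 : S := ⟨Cardinal.aleph0, hmem⟩ with hc0
    have hcnt : Countable ((c0 : Cardinal).ord.ToType) := by
      rw [← Cardinal.mk_le_aleph0_iff, Cardinal.mk_ord_toType]
    have hne : Nonempty ((c0 : Cardinal).ord.ToType) := by
      rw [Ordinal.toType_nonempty_iff_ne_zero]
      exact (Cardinal.isRegular_aleph0.ord_pos).ne'
    obtain ⟨j, hj⟩ := hcnt.exists_injective_nat
    have hsurj : Function.Surjective (Function.invFun j) := Function.invFun_surjective hj
    set e : ℕ → (c0 : Cardinal).ord.ToType := Function.invFun j with he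
    apply aux_no_sigma_cover U hU (fun n => {u | φ u c0 ≤ e n})
    · intro u
      obtain ⟨n, hn⟩ := hsurj (φ u c0)
      exact ⟨n, le_of_eq hn.symm⟩
    · intro n X hXc hXV
      have hb : ∀ μ : S, ∃ bμ : (μ : Cardinal).ord.ToType, ∀ x ∈ X, φ x μ ≤ bμ := by
        intro μ
        by_cases hμ : μ = c0
        · subst hμ
          exact ⟨e n, fun x hx => hXV hx⟩
        · have hreg := hS _ μ.2
          have hlt : Cardinal.aleph0 < (μ : Cardinal) := by
            refine lt_of_le_of_ne hreg.aleph0_le ?_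
            intro hcontra
            exact hμ (Subtype.ext hcontra.symm)
          obtain ⟨b, hbb⟩ := aux_bdd_of_countable hreg hlt
            ((fun x : UOrd U => φ x μ) '' X) (hXc.image _)
          exact ⟨b, fun x hx => hbb _ ⟨x, hx, rfl⟩⟩
      choose b hbs using hb
      exact pull X b (fun x hx μ => hbs μ x hx)
  · -- all coordinates are uncountable regular
    apply aux_no_sigma_cover U hU (fun _ => Set.univ)
    · exact fun u => ⟨0, trivial⟩
    · intro n X hXc _
      have hb : ∀ μ : S, ∃ bμ : (μ : Cardinal).ord.ToType, ∀ x ∈ X, φ x μ ≤ bμ := by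
        intro μ
        have hreg := hS _ μ.2
        have hlt : Cardinal.aleph0 < (μ : Cardinal) := by
          refine lt_of_le_of_ne hreg.aleph0_le ?_
          intro hcontra
          exact hmem (hcontra ▸ μ.2)
        obtain ⟨b, hbb⟩ := aux_bdd_of_countable hreg hlt
          ((fun x : UOrd U => φ x μ) '' X) (hXc.image _)
        exact ⟨b, fun x hx => hbb _ ⟨x, hx, rfl⟩⟩
      choose b hbs using hb
      exact pull X b (fun x hx μ => hbs μ x hx)
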